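/- Let m ≥ 1, let a_1,…,a_m be reals, let F be the associated m×m companion-form matrix, let n ≥ 1 and r ∈ ℝ, and let D_{nr} = diag(2^{−nr}, 1, …, 1). If 2^{nr} > max{ |a_m|·2^{m−1}, max_{1≤i≤m−1} |a_i|·2^i }, then the spectral radius of the nonnegative matrix F̄ D_{nr} is strictly less than 1. -/

import Mathlib

open Matrix

/-- The `m × m` companion-form matrix of the reals `a 0, …, a (m-1)`:
first column `(-a 0, …, -a (m-1))ᵀ`, ones on the superdiagonal, zeros elsewhere. -/
def companionForm (m : ℕ) (a : Fin m → ℝ) : Matrix (Fin m) (Fin m) ℝ :=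
  Matrix.of fun i j =>
    (if (j : ℕ) = 0 then -a i else 0) + (if (j : ℕ) = (i : ℕ) + 1 then 1 else 0)

/-- The entrywise absolute value of a real matrix. -/
def entrywiseAbs {m : ℕ} (A : Matrix (Fin m) (Fin m) ℝ) : Matrix (Fin m) (Fin m) ℝ :=
  Matrix.of fun i j => |A i j|

/-- The diagonal matrix `D_{nr} = diag(2^{-nr}, 1, …, 1)`. -/
noncomputable def rateDiag (m n : ℕ) (r : ℝ) : Matrix (Fin m) (Fin m) ℝ :=
  Matrix.diagonal fun i => if (i : ℕ) = 0 then (2 : ℝ) ^ (-((n : ℝ) * r)) else 1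

/-- The spectral radius of a real square matrix: the maximum modulus of its complex
eigenvalues, formalized as the spectral radius (over `ℂ`) of its complexification. -/
noncomputable def specRad {m : ℕ} (A : Matrix (Fin m) (Fin m) ℝ) : ENNReal :=
  spectralRadius ℂ (A.map (Complex.ofReal ·))

attribute [local instance] Matrix.linftyOpNormedRing Matrix.linftyOpNormedAlgebra

/-- If `2^{nr} > max{|a_m| 2^{m-1}, max_{1 ≤ i ≤ m-1} |a_i| 2^i}`,
then the nonnegative matrix `F̄ D_{nr}` has spectral radius `< 1`.
(`a : Fin m → ℝ` is 0-indexed, so `a_i = a ⟨i-1,_⟩`.) -/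
theorem specRad_lt_one_of_rate (m : ℕ) (hm : 1 ≤ m) (a : Fin m → ℝ)
    (n : ℕ) (hn : 1 ≤ n) (r : ℝ)
    (hlast : |a ⟨m - 1, by omega⟩| * 2 ^ (m - 1) < (2 : ℝ) ^ ((n : ℝ) * r))
    (hrest : ∀ i : Fin m, (i : ℕ) + 1 < m →
      |a i| * 2 ^ ((i : ℕ) + 1) < (2 : ℝ) ^ ((n : ℝ) * r)) :
    specRad (entrywiseAbs (companionForm m a) * rateDiag m n r) < 1 := by
  have hmm : NeZero m := ⟨by omega⟩
  have hne : Nonempty (Fin m) := ⟨⟨0, by omega⟩⟩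
  set P : ℝ := (2 : ℝ) ^ ((n : ℝ) * r) with hPdef
  have hP : 0 < P := Real.rpow_pos_of_pos (by norm_num) _
  set A : Matrix (Fin m) (Fin m) ℝ := entrywiseAbs (companionForm m a) * rateDiag m n r with hAdef
  have hAentry : ∀ i j : Fin m, A i j =
      |(if (j : ℕ) = 0 then -a i else 0) + (if (j : ℕ) = (i : ℕ) + 1 then 1 else 0)| *
        (if (j : ℕ) = 0 then P⁻¹ else 1) := by
    intro i j
    rw [hAdef]
    show (entrywiseAbs (companionForm m a) * rateDiag m n r) i j = _
    unfold rateDiag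
    rw [Matrix.mul_diagonal]
    have : entrywiseAbs (companionForm m a) i j =
        |(if (j : ℕ) = 0 then -a i else 0) + (if (j : ℕ) = (i : ℕ) + 1 then 1 else 0)| := rfl
    rw [this]
    congr 1
    split_ifs
    · rw [Real.rpow_neg (by norm_num)]
    · rfl
  have hA0 : ∀ i j, 0 ≤ A i j := by
    intro i j
    rw [hAentry]
    refine mul_nonneg (abs_nonneg _) ?_
    split_ifs
    · positivity
    · norm_num
  set B : Matrix (Fin m) (Fin m) ℂ := A.map (Complex.ofReal ·) with hBdef
  have h2 : (2 : ℂ) ≠ 0 := by norm_num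
  set u : (Matrix (Fin m) (Fin m) ℂ)ˣ :=
    ⟨Matrix.diagonal (fun j => (2 : ℂ) ^ (-(j : ℤ))),
     Matrix.diagonal (fun j => (2 : ℂ) ^ ((j : ℤ))),
     by rw [Matrix.diagonal_mul_diagonal]; simp [← zpow_add₀ h2],
     by rw [Matrix.diagonal_mul_diagonal]; simp [← zpow_add₀ h2]⟩ with hu
  set C : Matrix (Fin m) (Fin m) ℂ :=
    (↑u⁻¹ : Matrix (Fin m) (Fin m) ℂ) * B * (↑u : Matrix (Fin m) (Fin m) ℂ) with hC
  have hspec : specRad A = spectralRadius ℂ C := by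
    unfold specRad spectralRadius
    rw [hC, spectrum.units_conjugate']
  rw [hspec]
  refine lt_of_le_of_lt (spectrum.spectralRadius_le_nnnorm (𝕜 := ℂ) C) ?_
  rw [show (1 : ENNReal) = ((1 : NNReal) : ENNReal) by norm_num, ENNReal.coe_lt_coe,
    Matrix.linfty_opNNNorm_def, Finset.sup_lt_iff (by norm_num : (⊥ : NNReal) < 1)]
  intro i _
  rw [← NNReal.coe_lt_coe]
  push_cast [coe_nnnorm]
  set g : Fin m → ℝ := fun j => (2:ℝ)^((i:ℤ)) * A i j * (2:ℝ)^(-(j:ℤ)) with hg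
  have hCij : ∀ j, C i j = ((g j : ℝ) : ℂ) := by
    intro j
    have hinv : (↑u⁻¹ : Matrix (Fin m) (Fin m) ℂ)
        = Matrix.diagonal (fun j : Fin m => (2 : ℂ) ^ ((j : ℤ))) := rfl
    have hval : (↑u : Matrix (Fin m) (Fin m) ℂ)
        = Matrix.diagonal (fun j : Fin m => (2 : ℂ) ^ (-(j : ℤ))) := rfl
    rw [hC, hinv, hval]
    simp only [Matrix.mul_diagonal, Matrix.diagonal_mul, hBdef, Matrix.map_apply, hg]
    push_cast
    ring
  have hnorm : ∀ j, ‖C i j‖ = g j := by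
    intro j
    rw [hCij j, Complex.norm_real, Real.norm_eq_abs, abs_of_nonneg]
    have := hA0 i j
    positivity
  rw [Finset.sum_congr rfl (fun j _ => hnorm j)]
  -- now the real row-sum inequality
  rcases Nat.lt_or_ge ((i:ℕ) + 1) m with hi | hi
  · -- not the last row
    set j1 : Fin m := ⟨(i:ℕ)+1, hi⟩ with hj1def
    have hne01 : (0 : Fin m) ≠ j1 := by
      intro h
      have h' := congrArg Fin.val h
      have h0 : ((0 : Fin m) : ℕ) = 0 := rfl
      have h1 : ((j1 : Fin m) : ℕ) = (i:ℕ) + 1 := rfl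
      omega
    have hzero : ∀ x ∈ Finset.univ, x ∉ ({(0:Fin m), j1} : Finset (Fin m)) → g x = 0 := by
      intro x _ hx
      simp only [Finset.mem_insert, Finset.mem_singleton, not_or] at hx
      have hx0 : (x : ℕ) ≠ 0 := by
        intro h; exact hx.1 (Fin.ext (by simpa using h))
      have hx1 : (x : ℕ) ≠ (i : ℕ) + 1 := by
        intro h; exact hx.2 (Fin.ext (by simpa [hj1def] using h))
      simp [hg, hAentry, hx0, hx1, hx.1]
    rw [← Finset.sum_subset (Finset.subset_univ ({(0:Fin m), j1} : Finset (Fin m))) hzero,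
      Finset.sum_pair hne01]
    have hg0 : g 0 = 2^((i:ℕ)) * |a i| * P⁻¹ := by
      have h0 : ((0 : Fin m) : ℕ) = 0 := rfl
      simp [hg, hAentry, h0, zpow_natCast]
      ring
    have hgj1 : g j1 = 1/2 := by
      have h1 : ((j1 : Fin m) : ℕ) = (i:ℕ) + 1 := rfl
      have h1' : ((j1 : Fin m) : ℕ) ≠ 0 := by omega
      simp only [hg, hAentry, h1, h1', Nat.add_one_ne_zero, if_neg, if_pos, if_false]
      rw [show |(0:ℝ) + 1| = 1 by norm_num, mul_one, mul_one,
        ← zpow_add₀ (by norm_num : (2:ℝ) ≠ 0)]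
      rw [show ((i:ℕ) : ℤ) + -((((i:ℕ) + 1 : ℕ)) : ℤ) = -1 by push_cast; ring]
      norm_num
    rw [hg0, hgj1]
    have hr := hrest i hi
    have hx : (2:ℝ)^((i:ℕ)) * |a i| * 2 = |a i| * 2 ^ ((i:ℕ)+1) := by
      rw [pow_succ]; ring
    have hkey : 2 ^ ((i:ℕ)) * |a i| * P⁻¹ < 1/2 := by
      rw [← div_eq_mul_inv, div_lt_iff₀ hP]
      linarith [hrest i hi, hx]
    linarith
  · -- the last row
    have him : (i : ℕ) = m - 1 := by omega
    have hzero : ∀ x ∈ Finset.univ, x ≠ (0 : Fin m) → g x = 0 := by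
      intro x _ hx
      have hx0 : (x : ℕ) ≠ 0 := fun h => hx (Fin.ext (by simpa using h))
      have hx1 : (x : ℕ) ≠ (i : ℕ) + 1 := by
        have := x.isLt; omega
      simp [hg, hAentry, hx0, hx1, hx]
    rw [Finset.sum_eq_single_of_mem (0 : Fin m) (Finset.mem_univ _) hzero]
    have h0 : ((0 : Fin m) : ℕ) = 0 := rfl
    have hg0 : g 0 = 2^((i:ℕ)) * |a i| * P⁻¹ := by
      simp [hg, hAentry, h0, zpow_natCast]
      ring
    rw [hg0]
    have hai : a ⟨m - 1, by omega⟩ = a i := by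
      congr 1
      exact Fin.ext (by simp [him])
    rw [hai] at hlast
    rw [him, ← div_eq_mul_inv, div_lt_one hP]
    linarith
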